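/- Let y_a ≤ y_{a'} − η for some η ≥ 0, and let Ȳ_a, Ȳ_{a'}, S_a², S_{a'}², N_a, N_{a'} be sample means, sample variances, and sample sizes of the two populations, with Ȳ_a ≥ Ȳ_{a'} − η. Then the plug-in GLR statistic Z̃ = (Ȳ_a − Ȳ_{a'} + η)²/(2(S_a²/N_a + S_{a'}²/N_{a'})) is bounded above by the summed self-normalized deviation U = N_a(Ȳ_a − y_a)²/(2S_a²) + N_{a'}(Ȳ_{a'} − y_{a'})²/(2S_{a'}²). -/

import Mathlib

lemma aux19 (p q u w A : ℝ) (hp : 0 < p) (hq : 0 < q) (hA : 0 ≤ A)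
    (h : A ≤ u + w) : A ^ 2 / (p + q) ≤ u ^ 2 / p + w ^ 2 / q := by
  rw [div_add_div _ _ (ne_of_gt hp) (ne_of_gt hq), div_le_div_iff₀ (by linarith) (by positivity)]
  have h2 : A ^ 2 ≤ (u + w) ^ 2 := by nlinarith
  nlinarith [sq_nonneg (u * q - w * p), mul_pos hp hq,
    mul_le_mul_of_nonneg_right h2 (mul_pos hp hq).le]

/-- deterministic domination of the plug-in GLR statistic by the
summed self-normalized deviation.  If the true means satisfy y_a ≤ y_{a'} − η
with η ≥ 0 and the sample means satisfy Ȳ_a ≥ Ȳ_{a'} − η, then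
(Ȳ_a − Ȳ_{a'} + η)²/(2(S_a²/N_a + S_{a'}²/N_{a'}))
  ≤ N_a(Ȳ_a − y_a)²/(2S_a²) + N_{a'}(Ȳ_{a'} − y_{a'})²/(2S_{a'}²). -/
theorem stmt19 (Na Na' : ℕ) (hNa : 1 ≤ Na) (hNa' : 1 ≤ Na')
    (ya ya' Ya Ya' Sa2 Sa'2 η : ℝ) (hη : 0 ≤ η)
    (hgap : ya ≤ ya' - η) (hemp : Ya' - η ≤ Ya)
    (hS : 0 < Sa2) (hS' : 0 < Sa'2) :
    (Ya - Ya' + η) ^ 2 / (2 * (Sa2 / (Na : ℝ) + Sa'2 / (Na' : ℝ)))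
      ≤ (Na : ℝ) * (Ya - ya) ^ 2 / (2 * Sa2) +
        (Na' : ℝ) * (Ya' - ya') ^ 2 / (2 * Sa'2) := by
  have hNa0 : (0 : ℝ) < Na := by exact_mod_cast hNa
  have hNa'0 : (0 : ℝ) < Na' := by exact_mod_cast hNa'
  have hp : (0:ℝ) < Sa2 / Na := by positivity
  have hq : (0:ℝ) < Sa'2 / Na' := by positivity
  have key := aux19 (Sa2 / Na) (Sa'2 / Na') (Ya - ya) (ya' - Ya') (Ya - Ya' + η)
    hp hq (by linarith) (by linarith)
  have e1 : (Na : ℝ) * (Ya - ya) ^ 2 / (2 * Sa2) = (Ya - ya) ^ 2 / (Sa2 / Na) / 2 := by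
    field_simp
  have e2 : (Na' : ℝ) * (Ya' - ya') ^ 2 / (2 * Sa'2) = (ya' - Ya') ^ 2 / (Sa'2 / Na') / 2 := by
    rw [show (ya' - Ya')^2 = (Ya' - ya')^2 by ring]; field_simp
  rw [e1, e2, show 2 * (Sa2 / (Na : ℝ) + Sa'2 / (Na' : ℝ)) = (Sa2 / Na + Sa'2 / Na') * 2 by ring,
    ← div_div]
  linarith
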